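/- Let q ≥ 2, n ≥ 2, and i : Fin q → ZMod q, and let F be the layer-latin (n+1)-cube of order q whose layer j is L[ε_{i j}, n]. Then every cell of F is contained in the same number of transversals: for all layers l, l' : Fin q and all positions x, x' : Fin n → ZMod q, the number of transversals u of F with u l = x equals the number of transversals u of F with u l' = x'. -/
import Mathlib

open Function

variable {q n : ℕ}

private def PP (i : Fin q → ZMod q) (u : Fin q → Fin n → ZMod q) : Prop :=
  (∀ j : Fin n, Function.Bijective fun t => u t j) ∧
  (Function.Bijective fun t => i t + ∑ m : Fin n, u t m)

private lemma PP_add (i : Fin q → ZMod q) (u : Fin q → Fin n → ZMod q)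
    (d : Fin n → ZMod q) (h : PP i u) : PP i (fun t j => u t j + d j) := by
  obtain ⟨h1, h2⟩ := h
  constructor
  · intro j
    have := (Equiv.addRight (d j)).bijective.comp (h1 j)
    exact this
  · have : (fun t => i t + ∑ m : Fin n, (u t m + d m)) =
        fun t => (i t + ∑ m : Fin n, u t m) + ∑ m : Fin n, d m := by
      funext t; rw [Finset.sum_add_distrib]; ring
    rw [this]
    exact (Equiv.addRight _).bijective.comp h2

private lemma cardA (i : Fin q → ZMod q) (l : Fin q) (x x' : Fin n → ZMod q) :
    Nat.card {u : Fin q → Fin n → ZMod q // PP i u ∧ u l = x} =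
    Nat.card {u : Fin q → Fin n → ZMod q // PP i u ∧ u l = x'} := by
  apply Nat.card_congr
  refine ⟨fun u => ⟨fun t j => u.1 t j + (x' j - x j), ?_, ?_⟩,
          fun u => ⟨fun t j => u.1 t j + (x j - x' j), ?_, ?_⟩, ?_, ?_⟩
  · exact PP_add i u.1 _ u.2.1
  · funext j; show u.1 l j + (x' j - x j) = x' j; rw [u.2.2]; ring
  · exact PP_add i u.1 _ u.2.1
  · funext j; show u.1 l j + (x j - x' j) = x j; rw [u.2.2]; ring
  · intro u; ext t j; simp; ring
  · intro u; ext t j; simp; ring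

private lemma cardB (hq : 2 ≤ q) (i : Fin q → ZMod q) (l : Fin q) (x : Fin n → ZMod q) :
    Nat.card {u : Fin q → Fin n → ZMod q // PP i u ∧ u l = x} * q ^ n =
    Nat.card {u : Fin q → Fin n → ZMod q // PP i u} := by
  haveI : NeZero q := ⟨by omega⟩
  classical
  have e1 : {u : Fin q → Fin n → ZMod q // PP i u} ≃
      Σ y : Fin n → ZMod q, {u : Fin q → Fin n → ZMod q // PP i u ∧ u l = y} := by
    refine (Equiv.sigmaFiberEquiv (fun u : {u // PP i u} => u.1 l)).symm.trans ?_
    refine Equiv.sigmaCongrRight fun y => ?_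
    exact ⟨fun v => ⟨v.1.1, v.1.2, v.2⟩, fun u => ⟨⟨u.1, u.2.1⟩, u.2.2⟩,
      fun _ => rfl, fun _ => rfl⟩
  rw [Nat.card_congr e1]
  have e2 : Nat.card ((y : Fin n → ZMod q) × {u : Fin q → Fin n → ZMod q // PP i u ∧ u l = y}) =
      ∑ y : Fin n → ZMod q, Nat.card {u : Fin q → Fin n → ZMod q // PP i u ∧ u l = y} := by
    simp [Nat.card_eq_fintype_card, Fintype.card_sigma]
  rw [e2]
  have : ∀ y : Fin n → ZMod q,
      Nat.card {u : Fin q → Fin n → ZMod q // PP i u ∧ u l = y} =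
      Nat.card {u : Fin q → Fin n → ZMod q // PP i u ∧ u l = x} :=
    fun y => cardA i l y x
  rw [Finset.sum_congr rfl fun y _ => this y, Finset.sum_const]
  simp [Fintype.card_fun, ZMod.card, mul_comm]

theorem shift_layer_latin_cube_cell_transversal_count_eq
    (q n : ℕ) (hq : 2 ≤ q) (hn : 2 ≤ n) (i : Fin q → ZMod q)
    (l l' : Fin q) (x x' : Fin n → ZMod q) :
    Nat.card {u : Fin q → Fin n → ZMod q //
        (∀ j : Fin n, Function.Bijective fun t => u t j) ∧
        (Function.Bijective fun t => i t + ∑ m : Fin n, u t m) ∧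
        u l = x} =
    Nat.card {u : Fin q → Fin n → ZMod q //
        (∀ j : Fin n, Function.Bijective fun t => u t j) ∧
        (Function.Bijective fun t => i t + ∑ m : Fin n, u t m) ∧
        u l' = x'} := by
  have h1 : {u : Fin q → Fin n → ZMod q //
        (∀ j : Fin n, Function.Bijective fun t => u t j) ∧
        (Function.Bijective fun t => i t + ∑ m : Fin n, u t m) ∧
        u l = x} ≃ {u : Fin q → Fin n → ZMod q // PP i u ∧ u l = x} :=
    Equiv.subtypeEquivRight fun u => and_assoc.symm
  have h2 : {u : Fin q → Fin n → ZMod q //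
        (∀ j : Fin n, Function.Bijective fun t => u t j) ∧
        (Function.Bijective fun t => i t + ∑ m : Fin n, u t m) ∧
        u l' = x'} ≃ {u : Fin q → Fin n → ZMod q // PP i u ∧ u l' = x'} :=
    Equiv.subtypeEquivRight fun u => and_assoc.symm
  rw [Nat.card_congr h1, Nat.card_congr h2]
  have := (cardB hq i l x).trans (cardB hq i l' x').symm
  have hqn : 0 < q ^ n := Nat.pow_pos (Nat.lt_of_lt_of_le Nat.zero_lt_two hq)
  exact Nat.eq_of_mul_eq_mul_right hqn this
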